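/- Let ℓ ≥ 0 be an integer and let v ∈ P^ℓ(ℝ³)³ be a polynomial vector field such that div v = 0 identically on ℝ³. Then there exists a polynomial vector field w ∈ P^{ℓ+1}(ℝ³)³ such that curl w = v. (Exactness at the divergence stage of the polynomial de Rham sequence: every divergence-free polynomial vector field of degree at most ℓ is the curl of a polynomial vector field of degree at most ℓ + 1.) -/

import Mathlib

open MvPolynomial

open Finsupp in
/-- Antiderivative in variable `i`, monomial-wise. -/
noncomputable def antid (i : Fin 3) (p : MvPolynomial (Fin 3) ℝ) : MvPolynomial (Fin 3) ℝ :=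
  (AddMonoidAlgebra.coeff p).sum fun d c => monomial (d + Finsupp.single i 1) (c / (d i + 1))

/-- Substitute `xᵢ := 0`, monomial-wise. -/
noncomputable def sub0 (i : Fin 3) (p : MvPolynomial (Fin 3) ℝ) : MvPolynomial (Fin 3) ℝ :=
  (AddMonoidAlgebra.coeff p).sum fun d c => if d i = 0 then monomial d c else 0

lemma antid_monomial (i : Fin 3) (m : Fin 3 →₀ ℕ) (c : ℝ) :
    antid i (monomial m c) = monomial (m + Finsupp.single i 1) (c / (m i + 1)) := by
  simp [antid]

lemma sub0_monomial (i : Fin 3) (m : Fin 3 →₀ ℕ) (c : ℝ) :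
    sub0 i (monomial m c) = if m i = 0 then monomial m c else 0 := by
  simp [sub0]

lemma antid_add (i : Fin 3) (p q : MvPolynomial (Fin 3) ℝ) :
    antid i (p + q) = antid i p + antid i q := by
  unfold antid
  rw [AddMonoidAlgebra.coeff_add]
  apply Finsupp.sum_add_index' <;> intros <;> simp [add_div]

lemma sub0_add (i : Fin 3) (p q : MvPolynomial (Fin 3) ℝ) :
    sub0 i (p + q) = sub0 i p + sub0 i q := by
  unfold sub0
  rw [AddMonoidAlgebra.coeff_add]
  apply Finsupp.sum_add_index' <;> intros <;> split <;> simp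

lemma antid_neg (i : Fin 3) (p : MvPolynomial (Fin 3) ℝ) :
    antid i (-p) = -antid i p := by
  have h := antid_add i p (-p)
  simp only [add_neg_cancel] at h
  have h0 : antid i (0 : MvPolynomial (Fin 3) ℝ) = 0 := by simp [antid]
  rw [h0] at h
  linear_combination -h

lemma pderiv_antid_self (i : Fin 3) (p : MvPolynomial (Fin 3) ℝ) :
    pderiv i (antid i p) = p := by
  induction p using MvPolynomial.induction_on' with
  | monomial m c =>
    rw [antid_monomial, pderiv_monomial]
    have h1 : (m + Finsupp.single i 1) - Finsupp.single i 1 = m := by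
      ext k
      simp only [Finsupp.tsub_apply, Finsupp.add_apply, Finsupp.single_apply]
      rcases eq_or_ne i k with rfl | hik
      · rw [if_pos rfl]; omega
      · rw [if_neg hik]; omega
    have h2 : (m + Finsupp.single i 1 : Fin 3 →₀ ℕ) i = m i + 1 := by
      simp [Finsupp.add_apply, Finsupp.single_apply]
    rw [h1, h2]
    push_cast
    rw [div_mul_cancel₀]
    positivity
  | add p q hp hq => rw [antid_add, map_add, hp, hq]

lemma pderiv_antid_comm {i j : Fin 3} (h : j ≠ i) (p : MvPolynomial (Fin 3) ℝ) :
    pderiv j (antid i p) = antid i (pderiv j p) := by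
  induction p using MvPolynomial.induction_on' with
  | monomial m c =>
    rw [antid_monomial, pderiv_monomial, pderiv_monomial, antid_monomial]
    have h1 : (m + Finsupp.single i 1) - Finsupp.single j 1
        = (m - Finsupp.single j 1) + Finsupp.single i 1 := by
      ext k
      simp only [Finsupp.tsub_apply, Finsupp.add_apply, Finsupp.single_apply]
      rcases eq_or_ne i k with rfl | hik
      · rw [if_pos rfl, if_neg (h : j ≠ i)]
        omega
      · rw [if_neg hik]
        rcases eq_or_ne j k with rfl | hjk
        · rw [if_pos rfl]; omega
        · rw [if_neg hjk]; omega
    have h2 : (m + Finsupp.single i 1 : Fin 3 →₀ ℕ) j = m j := by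
      simp [Finsupp.add_apply, Finsupp.single_apply, if_neg (Ne.symm h)]
    have h3 : (m - Finsupp.single j 1 : Fin 3 →₀ ℕ) i = m i := by
      simp [Finsupp.tsub_apply, Finsupp.single_apply, if_neg h]
    rw [h1, h2, h3]
    congr 1
    ring
  | add p q hp hq => rw [antid_add, map_add, map_add, hp, hq, antid_add]

lemma antid_pderiv_self (i : Fin 3) (p : MvPolynomial (Fin 3) ℝ) :
    antid i (pderiv i p) = p - sub0 i p := by
  induction p using MvPolynomial.induction_on' with
  | monomial m c =>
    rw [pderiv_monomial, antid_monomial, sub0_monomial]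
    rcases Nat.eq_zero_or_pos (m i) with h0 | h0
    · simp [h0]
    · rw [if_neg (by omega)]
      have h1 : (m - Finsupp.single i 1) + Finsupp.single i 1 = m := by
        ext k
        simp only [Finsupp.tsub_apply, Finsupp.add_apply, Finsupp.single_apply]
        rcases eq_or_ne i k with rfl | hik
        · rw [if_pos rfl]; omega
        · rw [if_neg hik]; omega
      have h2 : (m - Finsupp.single i 1 : Fin 3 →₀ ℕ) i = m i - 1 := by
        rw [Finsupp.tsub_apply, Finsupp.single_apply, if_pos rfl]
      have hmi : ((m i : ℝ)) ≠ 0 := Nat.cast_ne_zero.mpr (by omega)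
      have h2' : ((((m - Finsupp.single i 1 : Fin 3 →₀ ℕ) i : ℕ)) : ℝ) + 1 = (m i : ℝ) := by
        rw [h2, Nat.cast_sub h0]; ring
      rw [h1, h2', sub_zero]
      congr 1
      field_simp
  | add p q hp hq =>
    rw [map_add, antid_add, hp, hq, sub0_add]
    ring

lemma pderiv_sub0_self (i : Fin 3) (p : MvPolynomial (Fin 3) ℝ) :
    pderiv i (sub0 i p) = 0 := by
  induction p using MvPolynomial.induction_on' with
  | monomial m c =>
    rw [sub0_monomial]
    split
    · rw [pderiv_monomial]
      simp [*]
    · simp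
  | add p q hp hq => rw [sub0_add, map_add, hp, hq, add_zero]

lemma antid_totalDegree_le (i : Fin 3) (p : MvPolynomial (Fin 3) ℝ) :
    (antid i p).totalDegree ≤ p.totalDegree + 1 := by
  apply totalDegree_finsetSum_le
  intro d hd
  refine (totalDegree_monomial_le _ _).trans ?_
  rw [Finsupp.sum_add_index' (fun _ => rfl) (fun _ _ _ => rfl),
    Finsupp.sum_single_index rfl]
  exact Nat.add_le_add_right (le_totalDegree hd) 1

lemma sub0_totalDegree_le (i : Fin 3) (p : MvPolynomial (Fin 3) ℝ) :
    (sub0 i p).totalDegree ≤ p.totalDegree := by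
  apply totalDegree_finsetSum_le
  intro d hd
  dsimp only
  split
  · exact (totalDegree_monomial_le _ _).trans (le_totalDegree hd)
  · simp

/-- The curl of a polynomial vector field on `ℝ³`, as a polynomial vector field. -/
noncomputable def pcurl3 (w : Fin 3 → MvPolynomial (Fin 3) ℝ) : Fin 3 → MvPolynomial (Fin 3) ℝ :=
  ![pderiv 1 (w 2) - pderiv 2 (w 1),
    pderiv 2 (w 0) - pderiv 0 (w 2),
    pderiv 0 (w 1) - pderiv 1 (w 0)]

/-- Every divergence-free polynomial vector field of degree at most `ℓ` on
`ℝ³` is the curl of a polynomial vector field of degree at most `ℓ + 1`. -/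
theorem exists_curl_potential_of_div_free (ℓ : ℕ) (v : Fin 3 → MvPolynomial (Fin 3) ℝ)
    (hv : ∀ i, (v i).totalDegree ≤ ℓ)
    (hdiv : ∀ x : Fin 3 → ℝ, (∑ i, eval x (pderiv i (v i))) = 0) :
    ∃ w : Fin 3 → MvPolynomial (Fin 3) ℝ, (∀ i, (w i).totalDegree ≤ ℓ + 1) ∧
      ∀ (x : Fin 3 → ℝ) (i : Fin 3), eval x (pcurl3 w i) = eval x (v i) := by
  have hdiv' : pderiv 0 (v 0) + pderiv 1 (v 1) + pderiv 2 (v 2) = 0 := by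
    apply MvPolynomial.funext
    intro x
    have := hdiv x
    rw [Fin.sum_univ_three] at this
    simpa using this
  set w : Fin 3 → MvPolynomial (Fin 3) ℝ :=
    ![antid 2 (v 1), -(antid 2 (v 0)) + antid 0 (sub0 2 (v 2)), 0] with hw
  refine ⟨w, ?_, ?_⟩
  · intro i
    fin_cases i
    · exact (antid_totalDegree_le _ _).trans (Nat.add_le_add_right (hv 1) 1)
    · refine (totalDegree_add _ _).trans (max_le ?_ ?_)
      · rw [totalDegree_neg]
        exact (antid_totalDegree_le _ _).trans (Nat.add_le_add_right (hv 0) 1)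
      · exact (antid_totalDegree_le _ _).trans
          (Nat.add_le_add_right ((sub0_totalDegree_le _ _).trans (hv 2)) 1)
    · show (0 : MvPolynomial (Fin 3) ℝ).totalDegree ≤ ℓ + 1
      simp
  · have key : ∀ i, pcurl3 w i = v i := by
      intro i
      fin_cases i
      · show pderiv 1 (w 2) - pderiv 2 (w 1) = v 0
        show pderiv 1 0 - pderiv 2 (-(antid 2 (v 0)) + antid 0 (sub0 2 (v 2))) = v 0
        rw [map_add, map_neg, pderiv_antid_self,
          pderiv_antid_comm (by decide), pderiv_sub0_self]
        simp [antid]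
      · show pderiv 2 (w 0) - pderiv 0 (w 2) = v 1
        show pderiv 2 (antid 2 (v 1)) - pderiv 0 0 = v 1
        rw [pderiv_antid_self]
        simp
      · show pderiv 0 (w 1) - pderiv 1 (w 0) = v 2
        show pderiv 0 (-(antid 2 (v 0)) + antid 0 (sub0 2 (v 2)))
            - pderiv 1 (antid 2 (v 1)) = v 2
        rw [map_add, map_neg, pderiv_antid_self,
          pderiv_antid_comm (by decide), pderiv_antid_comm (by decide)]
        have h01 : pderiv 0 (v 0) + pderiv 1 (v 1) = -(pderiv 2 (v 2)) := by
          linear_combination hdiv'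
        have : antid 2 (pderiv 0 (v 0)) + antid 2 (pderiv 1 (v 1))
            = -(v 2 - sub0 2 (v 2)) := by
          rw [← antid_add, h01, antid_neg, antid_pderiv_self]
        linear_combination -this
    intro x i
    rw [key]
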